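/- Let N ∈ 𝓜̃_Q, where Q is a nondegenerate quadratic form on V. Then for every i ≥ 1 one has (ker N^i)^⊥ = N^i V + R and (N^i V)^⊥ = ker N^i; moreover NR = 0. -/

import Mathlib

open QuadraticMap

variable {k V : Type*}

/-- The perpendicular of a set `S ⊆ V` with respect to the bilinear form
`⟨x,y⟩ = Q(x+y) - Q x - Q y` associated to a quadratic form `Q`. -/
def perp [Field k] [AddCommGroup V] [Module k V] (Q : QuadraticForm k V) (S : Set V) :
    Submodule k V where
  carrier := {x | ∀ y ∈ S, polar Q x y = 0}
  add_mem' := by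
    intro a b ha hb y hy
    rw [polar_add_left, ha y hy, hb y hy, add_zero]
  zero_mem' := by
    intro y hy
    simp [polar]
  smul_mem' := by
    intro c a ha y hy
    rw [polar_smul_left, ha y hy, smul_zero]

/-- The radical `R = {x ∈ V : ⟨x, V⟩ = 0}` of the bilinear form associated to `Q`. -/
def rad [Field k] [AddCommGroup V] [Module k V] (Q : QuadraticForm k V) : Submodule k V :=
  perp Q Set.univ

/-- `Q` is nondegenerate: its restriction to the radical of the associated bilinear
form is injective. -/
def QNondeg [Field k] [AddCommGroup V] [Module k V] (Q : QuadraticForm k V) : Prop :=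
  Set.InjOn Q (rad Q : Set V)

/-- `𝓜̃_Q`: the set of nilpotent endomorphisms `N` with `Q(Nx) = -⟨x, Nx⟩` for all `x`
(equivalently, `1 + N` is a unipotent element of the orthogonal group `O_Q`). -/
def Mtilde [Field k] [AddCommGroup V] [Module k V] (Q : QuadraticForm k V) :
    Set (Module.End k V) :=
  {N | IsNilpotent N ∧ ∀ x, Q (N x) = - polar Q x (N x)}

section Aux
variable [Field k] [AddCommGroup V] [Module k V]
variable {Q : QuadraticForm k V} {N : Module.End k V}

lemma mem_perp_iff {S : Set V} {x : V} : x ∈ perp Q S ↔ ∀ y ∈ S, polar Q x y = 0 := Iff.rfl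

lemma mem_rad_iff {x : V} : x ∈ rad Q ↔ ∀ y, polar Q x y = 0 := by
  simp [rad, mem_perp_iff]

lemma auxA (h2 : ∀ x, Q (N x) = - polar Q x (N x)) (x y : V) :
    polar Q (N x) y + polar Q x (N y) + polar Q (N x) (N y) = 0 := by
  have h := h2 (x + y)
  rw [map_add, QuadraticMap.map_add Q (N x) (N y), polar_add_left, polar_add_right,
    polar_add_right, h2 x, h2 y, polar_comm Q y (N x)] at h
  linear_combination h

lemma auxB (h2 : ∀ x, Q (N x) = - polar Q x (N x)) (x y : V) :
    polar Q (N x) ((1 + N) y) = - polar Q x (N y) := by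
  have h := auxA h2 x y
  have hyy : (1 + N : Module.End k V) y = y + N y := by
    simp [LinearMap.add_apply]
  rw [hyy, polar_add_right]
  linear_combination h

lemma auxC (h2 : ∀ x, Q (N x) = - polar Q x (N x)) (i : ℕ) (x y : V) :
    polar Q ((N ^ i) x) (((1 + N) ^ i) y) = (-1 : k) ^ i * polar Q x ((N ^ i) y) := by
  induction i generalizing x y with
  | zero => simp
  | succ n ih =>
    have hc : Commute N (1 + N) := (Commute.one_right N).add_right (Commute.refl N)
    have e1 : (N ^ (n + 1)) x = (N ^ n) (N x) := by
      rw [pow_succ, Module.End.mul_apply]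
    have e2 : (((1 + N) ^ (n + 1)) y) = ((1 + N) ^ n) ((1 + N) y) := by
      rw [pow_succ, Module.End.mul_apply]
    rw [e1, e2, ih (N x) ((1 + N) y)]
    have e3 : (N ^ n) ((1 + N) y) = (1 + N) ((N ^ n) y) := by
      have h5 := (hc.pow_left n).eq
      calc (N ^ n) ((1 + N) y) = ((N ^ n) * (1 + N)) y := (Module.End.mul_apply _ _ _).symm
        _ = ((1 + N) * (N ^ n)) y := by rw [h5]
        _ = (1 + N) ((N ^ n) y) := Module.End.mul_apply _ _ _
    rw [e3, auxB h2 x ((N ^ n) y)]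
    have e4 : N ((N ^ n) y) = (N ^ (n + 1)) y := by rw [pow_succ', Module.End.mul_apply]
    rw [e4]
    ring

lemma auxD (hNil : IsNilpotent N) (h2 : ∀ x, Q (N x) = - polar Q x (N x)) (i : ℕ) (x : V) :
    (N ^ i) x ∈ rad Q ↔ ∀ y, polar Q x ((N ^ i) y) = 0 := by
  have hu : IsUnit ((1 + N) ^ i) := (hNil.isUnit_one_add).pow i
  constructor
  · intro h y
    have h0 := auxC h2 i x y
    rw [mem_rad_iff] at h
    rw [h (((1 + N) ^ i) y)] at h0
    rcases mul_eq_zero.mp h0.symm with h1 | h1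
    · exact absurd h1 (pow_ne_zero i (by norm_num))
    · exact h1
  · intro h
    rw [mem_rad_iff]
    intro z
    obtain ⟨u, rfl⟩ : ∃ y, ((1 + N) ^ i) y = z :=
      ((Module.End.isUnit_iff _).mp hu).surjective z
    rw [auxC h2 i x u, h u, mul_zero]

lemma auxNR (hQ : QNondeg Q) (hNil : IsNilpotent N)
    (h2 : ∀ x, Q (N x) = - polar Q x (N x)) {r : V} (hr : r ∈ rad Q) : N r = 0 := by
  have hmem : N r ∈ rad Q := by
    have := (auxD hNil h2 1 r).mpr (fun y => (mem_rad_iff.mp hr) _)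
    simpa using this
  have hq : Q (N r) = Q (0 : V) := by
    rw [h2 r, mem_rad_iff.mp hr, map_zero, neg_zero]
  exact hQ hmem (Submodule.zero_mem _) hq

lemma auxZero (hQ : QNondeg Q) (h2 : ∀ x, Q (N x) = - polar Q x (N x))
    {i : ℕ} (hi : 1 ≤ i) {u : V} (hu : (N ^ i) u ∈ rad Q) : (N ^ i) u = 0 := by
  obtain ⟨j, rfl⟩ := Nat.exists_eq_succ_of_ne_zero (Nat.one_le_iff_ne_zero.mp hi)
  have e : (N ^ (j + 1)) u = N ((N ^ j) u) := by
    rw [pow_succ', Module.End.mul_apply]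
  have hq : Q ((N ^ (j + 1)) u) = Q (0 : V) := by
    rw [e, h2 ((N ^ j) u), ← e, polar_comm, mem_rad_iff.mp hu, neg_zero, map_zero]
  exact hQ hu (Submodule.zero_mem _) hq

end Aux

/-- for `N ∈ 𝓜̃_Q` and `i ≥ 1` one has `(ker N^i)^⊥ = N^i V + R` and
`(N^i V)^⊥ = ker N^i`; moreover `NR = 0`. -/
theorem stmt1 [Field k] [AddCommGroup V] [Module k V] [FiniteDimensional k V]
    (Q : QuadraticForm k V) (hQ : QNondeg Q) (N : Module.End k V) (hN : N ∈ Mtilde Q) :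
    (∀ i : ℕ, 1 ≤ i →
        perp Q (LinearMap.ker (N ^ i) : Set V) = LinearMap.range (N ^ i) ⊔ rad Q ∧
        perp Q (LinearMap.range (N ^ i) : Set V) = LinearMap.ker (N ^ i)) ∧
    ∀ x ∈ rad Q, N x = 0 := by
  obtain ⟨hNil, h2⟩ := hN
  refine ⟨?_, fun x hx => auxNR hQ hNil h2 hx⟩
  intro i hi
  -- second equality
  have hperpRange : perp Q (LinearMap.range (N ^ i) : Set V) = LinearMap.ker (N ^ i) := by
    ext x
    rw [mem_perp_iff, LinearMap.mem_ker]
    constructor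
    · intro h
      apply auxZero hQ h2 hi
      rw [auxD hNil h2]
      intro y
      exact h ((N ^ i) y) ⟨y, rfl⟩
    · intro h y hy
      obtain ⟨z, rfl⟩ := hy
      have : (N ^ i) x ∈ rad Q := by rw [h]; exact Submodule.zero_mem _
      exact ((auxD hNil h2 i x).mp this) z
  refine ⟨?_, hperpRange⟩
  -- R ≤ ker N^i
  have hRker : rad Q ≤ LinearMap.ker (N ^ i) := by
    intro r hr
    rw [LinearMap.mem_ker]
    obtain ⟨j, rfl⟩ := Nat.exists_eq_succ_of_ne_zero (Nat.one_le_iff_ne_zero.mp hi)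
    have : (N ^ (j + 1)) r = (N ^ j) (N r) := by
      rw [pow_succ, Module.End.mul_apply]
    rw [this, auxNR hQ hNil h2 hr, map_zero]
  -- range ⊓ rad = ⊥
  have hint : LinearMap.range (N ^ i) ⊓ rad Q = ⊥ := by
    rw [Submodule.eq_bot_iff]
    rintro x ⟨⟨u, rfl⟩, hx2⟩
    exact auxZero hQ h2 hi hx2
  -- sup ≤ perp ker
  have hle : LinearMap.range (N ^ i) ⊔ rad Q ≤ perp Q (LinearMap.ker (N ^ i) : Set V) := by
    apply sup_le
    · rintro x ⟨u, rfl⟩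
      intro z hz
      have hz' : (N ^ i) z = 0 := hz
      have hu : IsUnit ((1 + N) ^ i) := (hNil.isUnit_one_add).pow i
      have hbij := (Module.End.isUnit_iff _).mp hu
      obtain ⟨b, hzb⟩ := hbij.surjective z
      have hNb : (N ^ i) b = 0 := by
        have hcomm : ((1 + N) ^ i) * (N ^ i) = (N ^ i) * ((1 + N) ^ i) :=
          (((Commute.one_right N).add_right (Commute.refl N)).symm.pow_pow i i).eq
        have h6 : ((1 + N) ^ i) ((N ^ i) b) = 0 := by
          rw [← Module.End.mul_apply, hcomm, Module.End.mul_apply, hzb, hz']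
        have := hbij.injective (a₁ := (N ^ i) b) (a₂ := 0) (by simpa using h6)
        exact this
      rw [← hzb, auxC h2 i u b, hNb, polar_zero_right, mul_zero]
    · intro r hr z _
      exact mem_rad_iff.mp hr z
  -- finrank computation
  set B : LinearMap.BilinForm k V := polarBilin Q with hB
  have hrefl : B.IsRefl := by
    intro x y h
    rwa [polarBilin_apply_apply, polar_comm, ← polarBilin_apply_apply] at h
  have hperp_eq : ∀ W : Submodule k V,
      perp Q (W : Set V) = B.orthogonal W := by
    intro W
    ext x
    rw [mem_perp_iff, LinearMap.BilinForm.mem_orthogonal_iff]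
    constructor
    · intro h n hn
      rw [polarBilin_apply_apply, polar_comm]
      exact h n hn
    · intro h y hy
      have := h y hy
      rw [polarBilin_apply_apply, polar_comm] at this
      exact this
  have hradtop : rad Q = B.orthogonal ⊤ := by
    rw [rad, ← hperp_eq ⊤]; rfl
  have hdim := LinearMap.BilinForm.finrank_add_finrank_orthogonal hrefl (LinearMap.ker (N ^ i))
  rw [← hradtop, inf_eq_right.mpr hRker, ← hperp_eq] at hdim
  have hdim2 := Submodule.finrank_sup_add_finrank_inf_eq (LinearMap.range (N ^ i)) (rad Q)
  rw [hint, finrank_bot] at hdim2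
  have hrk := LinearMap.finrank_range_add_finrank_ker (N ^ i)
  have : Module.finrank k (perp Q (LinearMap.ker (N ^ i) : Set V)) ≤
      Module.finrank k (LinearMap.range (N ^ i) ⊔ rad Q : Submodule k V) := by omega
  exact (Submodule.eq_of_le_of_finrank_le hle this).symm
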